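/- The joint softmax strategy of m independent players is (√|B|/τ)-Lipschitz in L1: if π(z)(b) = Π_{i=1}^m σ(q^i)(b^i) where σ is the softmax with temperature τ and z = (q^1, ..., q^m), then ‖π(z) - π(z̄)‖₁ ≤ (√|B|/τ)·‖z - z̄‖₁, where ‖z - z̄‖₁ = Σ_i ‖q^i - q̄^i‖₁ and |B| = Π_i |B^i|. -/

import Mathlib

/-- Softmax with temperature τ on ℝ^B for a finite set B. -/
noncomputable def softmax {B : Type*} [Fintype B] (τ : ℝ) (q : B → ℝ) (b : B) : ℝ :=
  Real.exp (q b / τ) / ∑ c, Real.exp (q c / τ)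

lemma exp_sub_one_le_half (t : ℝ) (ht : 0 ≤ t) :
    Real.exp t - 1 ≤ t * (Real.exp t + 1) / 2 := by
  set g : ℝ → ℝ := fun s => s * (Real.exp s + 1) / 2 - (Real.exp s - 1) with hg
  have hderiv : ∀ s : ℝ, HasDerivAt g ((1 - Real.exp s + s * Real.exp s) / 2) s := by
    intro s
    have h1 : HasDerivAt (fun s : ℝ => s * (Real.exp s + 1) / 2 - (Real.exp s - 1))
        ((1 * (Real.exp s + 1) + s * Real.exp s) / 2 - Real.exp s) s := by
      exact (((hasDerivAt_id s).mul ((Real.hasDerivAt_exp s).add_const 1)).div_const 2).sub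
        ((Real.hasDerivAt_exp s).sub_const 1)
    convert h1 using 1
    ring
  have hmono : MonotoneOn g (Set.Ici (0:ℝ)) := by
    apply monotoneOn_of_deriv_nonneg (convex_Ici 0)
    · exact (Continuous.continuousOn (by continuity))
    · intro s _
      exact (hderiv s).differentiableAt.differentiableWithinAt
    · intro s hs
      rw [(hderiv s).deriv]
      have h2 := Real.add_one_le_exp (-s)
      have h3 : Real.exp (-s) * Real.exp s = 1 := by
        rw [← Real.exp_add]; simp
      rw [interior_Ici] at hs
      nlinarith [Real.exp_pos s]
  have h0 : g 0 ≤ g t := hmono Set.self_mem_Ici ht ht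
  simp only [g] at h0
  norm_num at h0
  linarith

lemma abs_exp_sub_exp_le' {x y : ℝ} (h : y ≤ x) :
    Real.exp x - Real.exp y ≤ (Real.exp x + Real.exp y) / 2 * (x - y) := by
  have h1 := exp_sub_one_le_half (x - y) (sub_nonneg.2 h)
  have h2 : Real.exp (x - y) * Real.exp y = Real.exp x := by
    rw [← Real.exp_add]; ring_nf
  nlinarith [Real.exp_pos y]

lemma abs_exp_sub_exp_le (x y : ℝ) :
    |Real.exp x - Real.exp y| ≤ (Real.exp x + Real.exp y) / 2 * |x - y| := by
  rcases le_total y x with h | h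
  · rw [abs_of_nonneg (sub_nonneg.2 (Real.exp_le_exp.2 h)), abs_of_nonneg (sub_nonneg.2 h)]
    exact abs_exp_sub_exp_le' h
  · rw [abs_sub_comm, abs_sub_comm x y,
      abs_of_nonneg (sub_nonneg.2 (Real.exp_le_exp.2 h)), abs_of_nonneg (sub_nonneg.2 h)]
    linarith [abs_exp_sub_exp_le' h]

lemma softmax_l1 {β : Type*} [Fintype β] [Nonempty β] {τ : ℝ} (hτ : 0 < τ)
    (q p : β → ℝ) :
    ∑ b, |softmax τ q b - softmax τ p b| ≤ (∑ b, |q b - p b|) / τ := by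
  classical
  simp only [softmax]
  set A : β → ℝ := fun b => Real.exp (q b / τ) with hA
  set C : β → ℝ := fun b => Real.exp (p b / τ) with hC
  have hApos : ∀ b, 0 < A b := fun b => Real.exp_pos _
  have hCpos : ∀ b, 0 < C b := fun b => Real.exp_pos _
  set ZA : ℝ := ∑ c, A c with hZA
  set ZC : ℝ := ∑ c, C c with hZC
  have hZApos : 0 < ZA := Finset.sum_pos (fun b _ => hApos b) Finset.univ_nonempty
  have hZCpos : 0 < ZC := Finset.sum_pos (fun b _ => hCpos b) Finset.univ_nonempty
  have hAle : ∀ b, A b ≤ ZA := fun b =>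
    Finset.single_le_sum (fun c _ => (hApos c).le) (Finset.mem_univ b)
  have hCle : ∀ b, C b ≤ ZC := fun b =>
    Finset.single_le_sum (fun c _ => (hCpos c).le) (Finset.mem_univ b)
  -- pointwise formula for the difference
  have hdiff : ∀ b, A b / ZA - C b / ZC
      = (∑ c ∈ Finset.univ.erase b, (A b * C c - C b * A c)) / (ZA * ZC) := by
    intro b
    rw [div_sub_div _ _ hZApos.ne' hZCpos.ne']
    congr 1
    rw [Finset.sum_sub_distrib, ← Finset.mul_sum, ← Finset.mul_sum,
      Finset.sum_erase_eq_sub (Finset.mem_univ b), Finset.sum_erase_eq_sub (Finset.mem_univ b)]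
    ring
  -- per-term bound
  have hterm : ∀ b c, |A b * C c - C b * A c|
      ≤ (A b * C c + C b * A c) * (|q b - p b| + |q c - p c|) / (2 * τ) := by
    intro b c
    have e1 : A b * C c = Real.exp (q b / τ + p c / τ) := (Real.exp_add _ _).symm
    have e2 : C b * A c = Real.exp (p b / τ + q c / τ) := (Real.exp_add _ _).symm
    rw [e1, e2]
    have h1 := abs_exp_sub_exp_le (q b / τ + p c / τ) (p b / τ + q c / τ)
    have habs : |q b / τ + p c / τ - (p b / τ + q c / τ)|
        ≤ (|q b - p b| + |q c - p c|) / τ := by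
      have e3 : q b / τ + p c / τ - (p b / τ + q c / τ)
          = ((q b - p b) - (q c - p c)) / τ := by ring
      rw [e3, abs_div, abs_of_pos hτ]
      gcongr
      exact abs_sub _ _
    calc |Real.exp (q b / τ + p c / τ) - Real.exp (p b / τ + q c / τ)|
        ≤ (Real.exp (q b / τ + p c / τ) + Real.exp (p b / τ + q c / τ)) / 2
            * |q b / τ + p c / τ - (p b / τ + q c / τ)| := h1
      _ ≤ (Real.exp (q b / τ + p c / τ) + Real.exp (p b / τ + q c / τ)) / 2
            * ((|q b - p b| + |q c - p c|) / τ) := by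
          gcongr
      _ = (Real.exp (q b / τ + p c / τ) + Real.exp (p b / τ + q c / τ))
            * (|q b - p b| + |q c - p c|) / (2 * τ) := by ring
  -- the key double sum inequality
  have hswap : ∑ b, ∑ c ∈ Finset.univ.erase b, (A b * C c + C b * A c) * |q c - p c|
      = ∑ b, ∑ c ∈ Finset.univ.erase b, (A b * C c + C b * A c) * |q b - p b| := by
    rw [Finset.sum_comm' (t' := Finset.univ) (s' := fun c => Finset.univ.erase c)
      (by intro x y; simp [Finset.mem_erase, ne_comm, eq_comm])]
    refine Finset.sum_congr rfl fun b _ => Finset.sum_congr rfl fun c _ => by ring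
  have hdouble : ∑ b, ∑ c ∈ Finset.univ.erase b,
        (A b * C c + C b * A c) * (|q b - p b| + |q c - p c|)
      ≤ 2 * ZA * ZC * ∑ b, |q b - p b| := by
    have hexp : ∑ b, ∑ c ∈ Finset.univ.erase b,
          (A b * C c + C b * A c) * (|q b - p b| + |q c - p c|)
        = 2 * ∑ b, (A b * (ZC - C b) + C b * (ZA - A b)) * |q b - p b| := by
      have : ∀ b, ∑ c ∈ Finset.univ.erase b,
            (A b * C c + C b * A c) * (|q b - p b| + |q c - p c|)
          = ∑ c ∈ Finset.univ.erase b, (A b * C c + C b * A c) * |q b - p b|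
            + ∑ c ∈ Finset.univ.erase b, (A b * C c + C b * A c) * |q c - p c| := by
        intro b
        rw [← Finset.sum_add_distrib]
        exact Finset.sum_congr rfl fun c _ => by ring
      rw [Finset.sum_congr rfl fun b _ => this b, Finset.sum_add_distrib, hswap]
      have h2 : ∀ b, ∑ c ∈ Finset.univ.erase b, (A b * C c + C b * A c) * |q b - p b|
          = (A b * (ZC - C b) + C b * (ZA - A b)) * |q b - p b| := by
        intro b
        rw [← Finset.sum_mul]
        congr 1
        rw [Finset.sum_add_distrib, ← Finset.mul_sum, ← Finset.mul_sum,
          Finset.sum_erase_eq_sub (Finset.mem_univ b),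
          Finset.sum_erase_eq_sub (Finset.mem_univ b)]
      rw [Finset.sum_congr rfl fun b _ => h2 b]
      ring
    rw [hexp]
    have hbound : ∑ b, (A b * (ZC - C b) + C b * (ZA - A b)) * |q b - p b|
        ≤ ∑ b, ZA * ZC * |q b - p b| := by
      refine Finset.sum_le_sum fun b _ => ?_
      have := mul_nonneg (sub_nonneg.2 (hAle b)) (sub_nonneg.2 (hCle b))
      have := mul_pos (hApos b) (hCpos b)
      nlinarith [abs_nonneg (q b - p b), mul_nonneg (mul_nonneg (sub_nonneg.2 (hAle b))
        (sub_nonneg.2 (hCle b))) (abs_nonneg (q b - p b))]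
    calc 2 * ∑ b, (A b * (ZC - C b) + C b * (ZA - A b)) * |q b - p b|
        ≤ 2 * ∑ b, ZA * ZC * |q b - p b| := by linarith
      _ = 2 * ZA * ZC * ∑ b, |q b - p b| := by rw [← Finset.mul_sum]; ring
  -- assemble
  have hsum1 : ∑ b, |A b / ZA - C b / ZC|
      ≤ (∑ b, ∑ c ∈ Finset.univ.erase b, |A b * C c - C b * A c|) / (ZA * ZC) := by
    rw [Finset.sum_div]
    refine Finset.sum_le_sum fun b _ => ?_
    rw [hdiff b, abs_div, abs_of_pos (mul_pos hZApos hZCpos)]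
    gcongr
    exact Finset.abs_sum_le_sum_abs _ _
  have hnum : ∑ b, ∑ c ∈ Finset.univ.erase b, |A b * C c - C b * A c|
      ≤ ZA * ZC * ((∑ b, |q b - p b|) / τ) := by
    calc ∑ b, ∑ c ∈ Finset.univ.erase b, |A b * C c - C b * A c|
        ≤ ∑ b, ∑ c ∈ Finset.univ.erase b,
            (A b * C c + C b * A c) * (|q b - p b| + |q c - p c|) / (2 * τ) := by
          refine Finset.sum_le_sum fun b _ => Finset.sum_le_sum fun c _ => hterm b c
      _ = (∑ b, ∑ c ∈ Finset.univ.erase b,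
            (A b * C c + C b * A c) * (|q b - p b| + |q c - p c|)) / (2 * τ) := by
          rw [Finset.sum_div]
          exact Finset.sum_congr rfl fun b _ => by rw [Finset.sum_div]
      _ ≤ (2 * ZA * ZC * ∑ b, |q b - p b|) / (2 * τ) := by
          gcongr
      _ = ZA * ZC * ((∑ b, |q b - p b|) / τ) := by
          field_simp
  calc ∑ b, |A b / ZA - C b / ZC|
      ≤ (∑ b, ∑ c ∈ Finset.univ.erase b, |A b * C c - C b * A c|) / (ZA * ZC) := hsum1
    _ ≤ (ZA * ZC * ((∑ b, |q b - p b|) / τ)) / (ZA * ZC) := by gcongr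
    _ = (∑ b, |q b - p b|) / τ := by
        rw [mul_comm, mul_div_assoc, div_self (mul_pos hZApos hZCpos).ne', mul_one]

lemma softmax_nonneg {β : Type*} [Fintype β] (τ : ℝ) (q : β → ℝ) (b : β) :
    0 ≤ softmax τ q b := by
  unfold softmax
  positivity

lemma softmax_sum_one {β : Type*} [Fintype β] [Nonempty β] (τ : ℝ) (q : β → ℝ) :
    ∑ b, softmax τ q b = 1 := by
  unfold softmax
  rw [← Finset.sum_div, div_self]
  exact (Finset.sum_pos (fun b _ => Real.exp_pos _) Finset.univ_nonempty).ne'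

lemma prod_dist_le : ∀ {m : ℕ} (B : Fin m → Type u) [inst : ∀ i, Fintype (B i)]
    (f g : ∀ i, B i → ℝ), (∀ i x, 0 ≤ f i x) → (∀ i, ∑ x, f i x = 1) →
    (∀ i x, 0 ≤ g i x) → (∀ i, ∑ x, g i x = 1) →
    ∑ b : ∀ i, B i, |(∏ i, f i (b i)) - ∏ i, g i (b i)| ≤ ∑ i, ∑ x, |f i x - g i x| := by
  intro m
  induction m with
  | zero =>
    intro B _ f g _ _ _ _
    simp
  | succ n ih =>
    intro B _ f g hf0 hf1 hg0 hg1
    classical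
    have hsum : ∀ F : (∀ i, B i) → ℝ, ∑ b : ∀ i, B i, F b
        = ∑ x : B 0, ∑ y : ∀ i : Fin n, B i.succ, F (Fin.cons x y) := by
      intro F
      rw [← (Fin.consEquiv B).sum_comp F, Fintype.sum_prod_type]
      rfl
    rw [hsum]
    have key : ∀ (x : B 0) (y : ∀ i : Fin n, B i.succ),
        |(∏ i, f i (Fin.cons x y i)) - ∏ i, g i (Fin.cons x y i)|
        ≤ f 0 x * |(∏ i : Fin n, f i.succ (y i)) - ∏ i : Fin n, g i.succ (y i)|
          + |f 0 x - g 0 x| * ∏ i : Fin n, g i.succ (y i) := by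
      intro x y
      rw [Fin.prod_univ_succ, Fin.prod_univ_succ]
      simp only [Fin.cons_zero, Fin.cons_succ]
      have h1 : f 0 x * ∏ i : Fin n, f i.succ (y i) - g 0 x * ∏ i : Fin n, g i.succ (y i)
          = f 0 x * ((∏ i : Fin n, f i.succ (y i)) - ∏ i : Fin n, g i.succ (y i))
            + (f 0 x - g 0 x) * ∏ i : Fin n, g i.succ (y i) := by ring
      rw [h1]
      refine (abs_add_le _ _).trans ?_
      rw [abs_mul, abs_mul, abs_of_nonneg (hf0 0 x),
        abs_of_nonneg (Finset.prod_nonneg fun i _ => hg0 i.succ (y i))]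
    have hQ : ∑ y : ∀ i : Fin n, B i.succ, ∏ i : Fin n, g i.succ (y i) = 1 := by
      rw [← Fintype.prod_sum]
      simp [hg1]
    have hih := ih (fun i => B (i.succ)) (fun i => f i.succ) (fun i => g i.succ)
      (fun i x => hf0 i.succ x) (fun i => hf1 i.succ)
      (fun i x => hg0 i.succ x) (fun i => hg1 i.succ)
    calc ∑ x : B 0, ∑ y : ∀ i : Fin n, B i.succ,
          |(∏ i, f i (Fin.cons x y i)) - ∏ i, g i (Fin.cons x y i)|
        ≤ ∑ x : B 0, ∑ y : ∀ i : Fin n, B i.succ,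
            (f 0 x * |(∏ i : Fin n, f i.succ (y i)) - ∏ i : Fin n, g i.succ (y i)|
              + |f 0 x - g 0 x| * ∏ i : Fin n, g i.succ (y i)) := by
          exact Finset.sum_le_sum fun x _ => Finset.sum_le_sum fun y _ => key x y
      _ = (∑ x, f 0 x) * (∑ y : ∀ i : Fin n, B i.succ,
              |(∏ i : Fin n, f i.succ (y i)) - ∏ i : Fin n, g i.succ (y i)|)
            + (∑ x, |f 0 x - g 0 x|) * (∑ y : ∀ i : Fin n, B i.succ,
              ∏ i : Fin n, g i.succ (y i)) := by
          simp only [Finset.sum_add_distrib, ← Finset.mul_sum]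
          rw [← Finset.sum_mul, ← Finset.sum_mul]
      _ ≤ 1 * (∑ i : Fin n, ∑ x, |f i.succ x - g i.succ x|)
            + (∑ x, |f 0 x - g 0 x|) * 1 := by
          rw [hf1 0, hQ]
          have hnn : 0 ≤ ∑ x, |f 0 x - g 0 x| :=
            Finset.sum_nonneg fun x _ => abs_nonneg _
          nlinarith [hih]
      _ = ∑ i, ∑ x, |f i x - g i x| := by
          rw [Fin.sum_univ_succ]
          ring

/-- The joint softmax strategy of m independent players is (√|B|/τ)-Lipschitz
in L1, where |B| = ∏ᵢ |Bⁱ| and ‖z - z̄‖₁ = ∑ᵢ ‖qⁱ - q̄ⁱ‖₁. -/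
theorem joint_softmax_lipschitz {m : ℕ} (B : Fin m → Type*)
    [∀ i, Fintype (B i)] [∀ i, Nonempty (B i)]
    {τ : ℝ} (hτ : 0 < τ) (q qb : (i : Fin m) → B i → ℝ) :
    ∑ b : (i : Fin m) → B i, |(∏ i, softmax τ (q i) (b i)) - ∏ i, softmax τ (qb i) (b i)|
      ≤ (Real.sqrt (Fintype.card ((i : Fin m) → B i)) / τ) *
          ∑ i, ∑ x, |q i x - qb i x| := by
  have h1 := prod_dist_le B (fun i => softmax τ (q i)) (fun i => softmax τ (qb i))
    (fun i x => softmax_nonneg τ (q i) x) (fun i => softmax_sum_one τ (q i))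
    (fun i x => softmax_nonneg τ (qb i) x) (fun i => softmax_sum_one τ (qb i))
  have h2 : ∑ i, ∑ x, |softmax τ (q i) x - softmax τ (qb i) x|
      ≤ (∑ i, ∑ x, |q i x - qb i x|) / τ := by
    rw [Finset.sum_div]
    exact Finset.sum_le_sum fun i _ => softmax_l1 hτ (q i) (qb i)
  have hS : 0 ≤ ∑ i, ∑ x, |q i x - qb i x| :=
    Finset.sum_nonneg fun i _ => Finset.sum_nonneg fun x _ => abs_nonneg _
  have hcard : (1:ℝ) ≤ Real.sqrt (Fintype.card ((i : Fin m) → B i)) := by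
    rw [show (1:ℝ) = Real.sqrt 1 from (Real.sqrt_one).symm]
    apply Real.sqrt_le_sqrt
    exact_mod_cast Fintype.card_pos
  calc ∑ b : (i : Fin m) → B i,
        |(∏ i, softmax τ (q i) (b i)) - ∏ i, softmax τ (qb i) (b i)|
      ≤ (∑ i, ∑ x, |q i x - qb i x|) / τ := le_trans h1 h2
    _ ≤ (Real.sqrt (Fintype.card ((i : Fin m) → B i)) * ∑ i, ∑ x, |q i x - qb i x|) / τ := by
        gcongr
        exact le_mul_of_one_le_left hS hcard
    _ = (Real.sqrt (Fintype.card ((i : Fin m) → B i)) / τ) * ∑ i, ∑ x, |q i x - qb i x| := by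
        ring
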